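/- Let 1 ≤ p ≤ 2, let Ω, Σ ⊆ ℝ^{d+1}_+ be measurable sets with μ_α(Ω) < ∞ and μ_α(Σ) < ∞, and let ψ ∈ L^1_α ∩ L^p_α be bandlimited to Σ. Then ‖ψ·χ_Ω‖_{α,p} ≤ (μ_α(Σ))^{1/p} (μ_α(Ω))^{1/p} ‖ψ‖_{α,p}. -/

import Mathlib

open MeasureTheory

noncomputable section

/-- The ambient space ℝ^{d+1} (with Euclidean norm); ℝ^{d+1}_+ is carved out by the measure. -/
abbrev Wsp (d : ℕ) := EuclideanSpace ℝ (Fin (d + 1))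

/-- Density of the Weinstein measure μ_α:
x ↦ x_{d+1}^{2α+1} / ((2π)^d 2^{2α} Γ(α+1)^2). -/
def Wdensity (d : ℕ) (α : ℝ) (x : Wsp d) : ENNReal :=
  ENNReal.ofReal (Real.rpow (x (Fin.last d)) (2 * α + 1) /
    ((2 * Real.pi) ^ d * Real.rpow 2 (2 * α) * Real.Gamma (α + 1) ^ 2))

/-- The measure μ_α on ℝ^{d+1}_+ = ℝ^d × (0,∞). -/
def Wmeasure (d : ℕ) (α : ℝ) : Measure (Wsp d) :=
  ((volume : Measure (Wsp d)).restrict {x : Wsp d | 0 < x (Fin.last d)}).withDensity (Wdensity d α)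

/-- The normalized Bessel function j_α(u) = Γ(α+1) ∑ (-1)^k (u/2)^{2k} / (k! Γ(α+k+1)). -/
def besselNorm (α u : ℝ) : ℝ :=
  Real.Gamma (α + 1) *
    ∑' k : ℕ, (-1 : ℝ) ^ k * (u / 2) ^ (2 * k) / (k.factorial * Real.Gamma (α + k + 1))

/-- The Weinstein kernel Λ_α(x, λ) = e^{-i⟨x',λ'⟩} j_α(x_{d+1} λ_{d+1}). -/
def WKernel (d : ℕ) (α : ℝ) (x lam : Wsp d) : ℂ :=
  Complex.exp (-Complex.I * ((∑ i : Fin d, x (Fin.castSucc i) * lam (Fin.castSucc i) : ℝ) : ℂ)) *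
    ((besselNorm α (x (Fin.last d) * lam (Fin.last d)) : ℝ) : ℂ)

/-- The Weinstein transform F_α(φ)(λ) = ∫ φ(x) Λ_α(x,λ) dμ_α(x). -/
def WT (d : ℕ) (α : ℝ) (φ : Wsp d → ℂ) (lam : Wsp d) : ℂ :=
  ∫ x, φ x * WKernel d α x lam ∂(Wmeasure d α)

/-- f is ε-concentrated to E in L^r_α-norm: ‖f - f·χ_E‖_{α,r} ≤ ε ‖f‖_{α,r}. -/
def Concentrated (d : ℕ) (α : ℝ) (r : ENNReal) (ε : ℝ) (f : Wsp d → ℂ) (E : Set (Wsp d)) :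
    Prop :=
  eLpNorm (fun x => f x - E.indicator f x) r (Wmeasure d α) ≤
    ENNReal.ofReal ε * eLpNorm f r (Wmeasure d α)

/-- The operator Q_Σφ(x) = ∫_Σ F_α(φ)(λ) conj(Λ_α(x,λ)) dμ_α(λ). -/
def Qop (d : ℕ) (α : ℝ) (T : Set (Wsp d)) (φ : Wsp d → ℂ) (x : Wsp d) : ℂ :=
  ∫ lam in T, WT d α φ lam * (starRingEnd ℂ) (WKernel d α x lam) ∂(Wmeasure d α)

/-- ψ is bandlimited to Σ: F_α(ψ) vanishes a.e. outside Σ and ψ = Q_Σψ a.e. -/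
def Bandlimited (d : ℕ) (α : ℝ) (T : Set (Wsp d)) (ψ : Wsp d → ℂ) : Prop :=
  (∀ᵐ lam ∂(Wmeasure d α), lam ∉ T → WT d α ψ lam = 0) ∧
  (∀ᵐ x ∂(Wmeasure d α), ψ x = Qop d α T ψ x)

open Real Set intervalIntegral
open scoped ENNReal NNReal

namespace WeinsteinAux

/-- The auxiliary integral `J_k = ∫_0^1 t^{2k} (1-t²)^{α-1/2} dt`. -/
def Jb (α : ℝ) (k : ℕ) : ℝ :=
  ∫ t in Set.Ioo (0:ℝ) 1, t ^ (2 * k) * (1 - t ^ 2) ^ (α - 1/2)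

lemma integrableOn_pow_mul_rpow {r : ℝ} (hr : -1 < r) (m : ℕ) :
    IntegrableOn (fun t : ℝ => t ^ m * (1 - t ^ 2) ^ r) (Set.Ioo (0:ℝ) 1) := by
  set C : ℝ := max 1 ((2:ℝ) ^ r) with hC
  have hC1 : (1:ℝ) ≤ C := le_max_left _ _
  have hbase : IntervalIntegrable (fun t : ℝ => (1 - t) ^ r) volume 0 1 := by
    have h := (intervalIntegrable_rpow' (a := (0:ℝ)) (b := 1) hr).comp_sub_left 1
    simpa using h.symm
  have hbase' : IntegrableOn (fun t : ℝ => (1 - t) ^ r) (Set.Ioo (0:ℝ) 1) := by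
    have := (intervalIntegrable_iff_integrableOn_Ioo_of_le (by norm_num : (0:ℝ) ≤ 1)).1 hbase
    exact this
  refine Integrable.mono' (hbase'.const_mul C) ?_ ?_
  · refine ((measurable_id.pow_const m).mul ?_).aestronglyMeasurable
    exact (measurable_const.sub (measurable_id.pow_const 2)).pow measurable_const
  · rw [ae_restrict_iff' measurableSet_Ioo]
    refine Filter.Eventually.of_forall fun t ht => ?_
    obtain ⟨h0, h1⟩ := ht
    have h1t : 0 < 1 - t := by linarith
    have h1t' : 0 < 1 + t := by linarith
    have hb : 0 < 1 - t ^ 2 := by nlinarith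
    have hfac : (1 - t ^ 2) = (1 - t) * (1 + t) := by ring
    have hsplit : (1 - t ^ 2) ^ r = (1 - t) ^ r * (1 + t) ^ r := by
      rw [hfac, Real.mul_rpow h1t.le h1t'.le]
    have h2r : (1 + t) ^ r ≤ C := by
      rcases le_or_gt 0 r with hr0 | hr0
      · exact le_trans (Real.rpow_le_rpow h1t'.le (by linarith) hr0) (le_max_right _ _)
      · exact le_trans (Real.rpow_le_one_of_one_le_of_nonpos (by linarith) hr0.le) hC1
    have hnorm : ‖t ^ m * (1 - t ^ 2) ^ r‖ = t ^ m * (1 - t ^ 2) ^ r := by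
      rw [Real.norm_eq_abs, abs_of_nonneg]
      positivity
    rw [hnorm, hsplit]
    have htm : t ^ m ≤ 1 := pow_le_one₀ h0.le h1.le
    have key : t ^ m * ((1 - t) ^ r * (1 + t) ^ r) ≤ 1 * ((1 - t) ^ r * C) := by
      apply mul_le_mul htm _ (by positivity) zero_le_one
      exact mul_le_mul_of_nonneg_left h2r (Real.rpow_nonneg h1t.le r)
    calc t ^ m * ((1 - t) ^ r * (1 + t) ^ r) ≤ 1 * ((1 - t) ^ r * C) := key
      _ = C * (1 - t) ^ r := by ring

variable {α : ℝ}

lemma Jb_succ (α : ℝ) (k : ℕ) :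
    Jb α (k + 1) = ∫ t in Set.Ioo (0:ℝ) 1, t ^ (2 * k + 2) * (1 - t ^ 2) ^ (α - 1/2) := by
  have h : 2 * (k + 1) = 2 * k + 2 := by ring
  rw [Jb, h]

lemma Jb_rec (hα : -1/2 < α) (k : ℕ) :
    (2 * (k:ℝ) + 1) * Jb α k = (2*α + 2*(k:ℝ) + 2) * Jb α (k+1) := by
  have hr1 : (-1:ℝ) < α - 1/2 := by linarith
  have hr2 : (-1:ℝ) < α + 1/2 := by linarith
  have hβ : (0:ℝ) < α + 1/2 := by linarith
  set G : ℝ → ℝ := fun t => t ^ (2*k+1) * (1 - t ^ 2) ^ (α + 1/2) with hG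
  set G' : ℝ → ℝ := fun t =>
      (2*(k:ℝ)+1) * (t ^ (2*k) * (1 - t ^ 2) ^ (α + 1/2))
        - (2*α+1) * (t ^ (2*k+2) * (1 - t ^ 2) ^ (α - 1/2)) with hG'
  have hderiv : ∀ t ∈ Set.Ioo (0:ℝ) 1, HasDerivAt G (G' t) t := by
    intro t ht
    have hbne : (1 - t ^ 2) ≠ 0 := by nlinarith [ht.1, ht.2]
    have h1 : HasDerivAt (fun t : ℝ => 1 - t ^ 2) (-(2*t)) t := by
      simpa using ((hasDerivAt_pow 2 t).const_sub 1)
    have h2 : HasDerivAt (fun y : ℝ => y ^ (α+1/2))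
        ((α+1/2) * (1 - t ^ 2) ^ (α+1/2-1)) (1 - t ^ 2) :=
      Real.hasDerivAt_rpow_const (Or.inl hbne)
    have h3 := h2.comp t h1
    have h4 : HasDerivAt (fun t : ℝ => t ^ (2*k+1)) ((2*(k:ℝ)+1) * t ^ (2*k)) t := by
      have := hasDerivAt_pow (2*k+1) t
      simpa [Nat.cast_add, Nat.cast_mul] using this
    have h5 := h4.mul h3
    refine h5.congr_deriv ?_
    have he : α + 1/2 - 1 = α - 1/2 := by ring
    rw [hG']
    simp only [Function.comp]
    rw [he]
    ring
  have hcont : ContinuousOn G (Set.Icc (0:ℝ) 1) := by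
    apply Continuous.continuousOn
    apply Continuous.mul (continuous_pow _)
    have : Continuous fun t : ℝ => 1 - t ^ 2 := continuous_const.sub (continuous_pow 2)
    exact (Real.continuous_rpow_const hβ.le).comp this
  have hint1 : IntegrableOn (fun t : ℝ => t ^ (2*k) * (1 - t ^ 2) ^ (α + 1/2))
      (Set.Ioo (0:ℝ) 1) := integrableOn_pow_mul_rpow hr2 (2*k)
  have hint2 : IntegrableOn (fun t : ℝ => t ^ (2*k+2) * (1 - t ^ 2) ^ (α - 1/2))
      (Set.Ioo (0:ℝ) 1) := integrableOn_pow_mul_rpow hr1 (2*k+2)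
  have hintG' : IntegrableOn G' (Set.Ioo (0:ℝ) 1) :=
    (hint1.const_mul _).sub (hint2.const_mul _)
  have hFTC := integral_eq_sub_of_hasDeriv_right_of_le (by norm_num : (0:ℝ) ≤ 1) hcont
    (fun x hx => (hderiv x hx).hasDerivWithinAt)
    ((intervalIntegrable_iff_integrableOn_Ioo_of_le (by norm_num)).2 hintG')
  have hG1 : G 1 = 0 := by
    rw [hG]; simp only []
    have : (1:ℝ) - 1 ^ 2 = 0 := by norm_num
    rw [this, Real.zero_rpow (by positivity)]
    ring
  have hG0 : G 0 = 0 := by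
    rw [hG]; simp
  rw [hG1, hG0, sub_zero] at hFTC
  have hIoo : ∫ t in (0:ℝ)..1, G' t = ∫ t in Set.Ioo (0:ℝ) 1, G' t := by
    rw [intervalIntegral.integral_of_le (by norm_num : (0:ℝ) ≤ 1),
      integral_Ioc_eq_integral_Ioo]
  rw [hIoo] at hFTC
  have hsplit : ∫ t in Set.Ioo (0:ℝ) 1, G' t
      = (2*(k:ℝ)+1) * (∫ t in Set.Ioo (0:ℝ) 1, t ^ (2*k) * (1 - t ^ 2) ^ (α + 1/2))
        - (2*α+1) * (∫ t in Set.Ioo (0:ℝ) 1, t ^ (2*k+2) * (1 - t ^ 2) ^ (α - 1/2)) := by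
    rw [hG']
    rw [integral_sub ((hint1.const_mul _)) ((hint2.const_mul _)),
      MeasureTheory.integral_const_mul, MeasureTheory.integral_const_mul]
  have hmid : (∫ t in Set.Ioo (0:ℝ) 1, t ^ (2*k) * (1 - t ^ 2) ^ (α + 1/2))
      = Jb α k - Jb α (k+1) := by
    have hptw : ∀ t ∈ Set.Ioo (0:ℝ) 1,
        t ^ (2*k) * (1 - t ^ 2) ^ (α + 1/2)
          = t ^ (2*k) * (1 - t ^ 2) ^ (α - 1/2) - t ^ (2*k+2) * (1 - t ^ 2) ^ (α - 1/2) := by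
      intro t ht
      have hb : (0:ℝ) < 1 - t ^ 2 := by nlinarith [ht.1, ht.2]
      have he : α + 1/2 = (α - 1/2) + 1 := by ring
      rw [he, Real.rpow_add_one (ne_of_gt hb)]
      ring
    rw [setIntegral_congr_fun measurableSet_Ioo hptw,
      integral_sub (integrableOn_pow_mul_rpow hr1 (2*k)) hint2]
    rw [Jb, Jb_succ]
  rw [hsplit, hmid] at hFTC
  rw [Jb_succ] at hFTC ⊢
  rw [Jb] at hFTC ⊢
  linarith [hFTC]

lemma Jb_formula (hα : -1/2 < α) (k : ℕ) :
    Jb α k * (4 ^ k * (k.factorial : ℝ) * Real.Gamma (α + k + 1)) =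
      (((2*k).factorial : ℝ)) * Real.Gamma (α + 1) * Jb α 0 := by
  induction k with
  | zero => simp [mul_comm]
  | succ k ih =>
    have hk0 : (0:ℝ) ≤ (k:ℝ) := Nat.cast_nonneg k
    have hpos : (0:ℝ) < α + k + 1 := by linarith
    have hG : Real.Gamma (α + (k+1:ℕ) + 1) = (α + k + 1) * Real.Gamma (α + k + 1) := by
      have he : α + ((k:ℝ)+1) + 1 = (α + k + 1) + 1 := by ring
      push_cast
      rw [he, Real.Gamma_add_one (ne_of_gt hpos)]
    have hfac2 : (((k+1).factorial : ℕ) : ℝ) = ((k:ℝ)+1) * (k.factorial : ℝ) := by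
      rw [Nat.factorial_succ]; push_cast; ring
    have hfac : (((2*(k+1)).factorial : ℕ) : ℝ)
        = (2*(k:ℝ)+2) * (2*(k:ℝ)+1) * ((2*k).factorial : ℝ) := by
      have h1 : 2*(k+1) = (2*k+1)+1 := by ring
      rw [h1, Nat.factorial_succ, Nat.factorial_succ]
      push_cast; ring
    have hrec := Jb_rec hα k
    rw [hG, hfac, hfac2]
    push_cast
    push_cast at ih
    linear_combination (-(2*((k:ℝ)+1) * 4^k * (k.factorial:ℝ) * Real.Gamma (α+(k:ℝ)+1))) * hrec
      + (2*((k:ℝ)+1)*(2*(k:ℝ)+1)) * ih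


lemma Jb_zero_pos (hα : -1/2 < α) : 0 < Jb α 0 := by
  have hr1 : (-1:ℝ) < α - 1/2 := by linarith
  have hint : IntegrableOn (fun t : ℝ => t ^ (2*0) * (1 - t ^ 2) ^ (α - 1/2))
      (Set.Ioo (0:ℝ) 1) := integrableOn_pow_mul_rpow hr1 0
  have hnonneg : (0 : ℝ → ℝ) ≤ᶠ[ae (volume.restrict (Set.Ioo (0:ℝ) 1))]
      fun t => t ^ (2*0) * (1 - t ^ 2) ^ (α - 1/2) := by
    filter_upwards [ae_restrict_mem measurableSet_Ioo] with t ht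
    have hb : (0:ℝ) < 1 - t ^ 2 := by nlinarith [ht.1, ht.2]
    have := Real.rpow_pos_of_pos hb (α - 1/2)
    have ht0 := ht.1
    simp only [Pi.zero_apply]
    positivity
  rw [Jb, setIntegral_pos_iff_support_of_nonneg_ae hnonneg hint]
  have hsub : Set.Ioo (0:ℝ) 1 ⊆
      (Function.support fun t => t ^ (2*0) * (1 - t ^ 2) ^ (α - 1/2)) ∩ Set.Ioo (0:ℝ) 1 := by
    intro t ht
    have hb : (0:ℝ) < 1 - t ^ 2 := by nlinarith [ht.1, ht.2]
    have hpos : 0 < t ^ (2*0) * (1 - t ^ 2) ^ (α - 1/2) := by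
      have := Real.rpow_pos_of_pos hb (α - 1/2)
      simpa using this
    exact ⟨Function.mem_support.2 (ne_of_gt hpos), ht⟩
  calc (0:ENNReal) < volume (Set.Ioo (0:ℝ) 1) := by rw [Real.volume_Ioo]; norm_num
    _ ≤ _ := measure_mono hsub

lemma besselNorm_mul_J0 (hα : -1/2 < α) (u : ℝ) :
    besselNorm α u * Jb α 0 =
      ∫ t in Set.Ioo (0:ℝ) 1, (1 - t ^ 2) ^ (α - 1/2) * Real.cos (u * t) := by
  have hr1 : (-1:ℝ) < α - 1/2 := by linarith
  set f : ℕ → ℝ → ℝ := fun k t =>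
    (1 - t ^ 2) ^ (α - 1/2) * ((-1:ℝ) ^ k * (u * t) ^ (2*k) / ((2*k).factorial : ℝ)) with hf
  have hWmeas : Measurable (fun t : ℝ => (1 - t ^ 2) ^ (α - 1/2)) :=
    (measurable_const.sub (measurable_id.pow_const 2)).pow measurable_const
  have hfmeas : ∀ k, AEStronglyMeasurable (f k) (volume.restrict (Set.Ioo (0:ℝ) 1)) := by
    intro k
    exact ((hWmeas.mul ((measurable_const.mul ((measurable_const.mul measurable_id).pow_const
      (2*k))).div_const _))).aestronglyMeasurable
  have hW : IntegrableOn (fun t : ℝ => (1 - t ^ 2) ^ (α - 1/2)) (Set.Ioo (0:ℝ) 1) := by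
    have := integrableOn_pow_mul_rpow hr1 0
    simpa using this
  have hWW : (∫⁻ t in Set.Ioo (0:ℝ) 1, (‖(1 - t ^ 2) ^ (α - 1/2)‖₊ : ℝ≥0∞)) ≠ ⊤ :=
    ne_of_lt hW.hasFiniteIntegral
  -- the summability bound
  have hbound : (∑' k : ℕ, ∫⁻ t in Set.Ioo (0:ℝ) 1, (‖f k t‖₊ : ℝ≥0∞)) ≠ ⊤ := by
    set c : ℕ → ℝ≥0∞ := fun k => ENNReal.ofReal (|u| ^ (2*k) / ((2*k).factorial : ℝ)) with hc
    have hck : ∀ k, (∫⁻ t in Set.Ioo (0:ℝ) 1, (‖f k t‖₊ : ℝ≥0∞))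
        ≤ c k * (∫⁻ t in Set.Ioo (0:ℝ) 1, (‖(1 - t ^ 2) ^ (α - 1/2)‖₊ : ℝ≥0∞)) := by
      intro k
      rw [← lintegral_const_mul' _ _ ENNReal.ofReal_ne_top]
      apply lintegral_mono_ae
      filter_upwards [ae_restrict_mem measurableSet_Ioo] with t ht
      have hptw : ‖f k t‖ ≤ (|u| ^ (2*k) / ((2*k).factorial : ℝ)) * ‖(1 - t ^ 2) ^ (α - 1/2)‖ := by
        rw [hf]
        simp only [norm_mul]
        rw [mul_comm]
        apply mul_le_mul_of_nonneg_right _ (norm_nonneg _)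
        have h1 : ‖(-1:ℝ) ^ k * (u * t) ^ (2*k) / ((2*k).factorial : ℝ)‖
            = |u * t| ^ (2*k) / ((2*k).factorial : ℝ) := by
          simp [Real.norm_eq_abs, abs_mul, abs_div, abs_pow]
        rw [h1]
        apply div_le_div_of_nonneg_right _ (by positivity)
        · apply pow_le_pow_left₀ (abs_nonneg _)
          rw [abs_mul]
          calc |u| * |t| ≤ |u| * 1 := by
                apply mul_le_mul_of_nonneg_left _ (abs_nonneg u)
                rw [abs_of_nonneg ht.1.le]; exact ht.2.le
            _ = |u| := mul_one _
      calc (‖f k t‖₊ : ℝ≥0∞) = ENNReal.ofReal ‖f k t‖ := (ofReal_norm_eq_enorm _).symm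
        _ ≤ ENNReal.ofReal ((|u| ^ (2*k) / ((2*k).factorial : ℝ)) * ‖(1 - t ^ 2) ^ (α - 1/2)‖) :=
            ENNReal.ofReal_le_ofReal hptw
        _ = c k * (‖(1 - t ^ 2) ^ (α - 1/2)‖₊ : ℝ≥0∞) := by
            rw [ENNReal.ofReal_mul (by positivity), ofReal_norm_eq_enorm, enorm_eq_nnnorm]
    have hsum : (∑' k : ℕ, c k) ≠ ⊤ := by
      have hble : ∀ k : ℕ, c k ≤ ENNReal.ofReal ((u ^ 2) ^ k / (k.factorial : ℝ)) := by
        intro k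
        apply ENNReal.ofReal_le_ofReal
        have h1 : |u| ^ (2*k) = (u ^ 2) ^ k := by
          rw [pow_mul, sq_abs]
        rw [h1]
        apply div_le_div_of_nonneg_left (by positivity) (by positivity)
        exact_mod_cast Nat.cast_le.2 (Nat.factorial_le (by omega : k ≤ 2*k))
      have hsummable : Summable (fun k : ℕ => (u ^ 2) ^ k / (k.factorial : ℝ)) :=
        Real.summable_pow_div_factorial (u ^ 2)
      have hle : (∑' k : ℕ, c k) ≤ ENNReal.ofReal (∑' k : ℕ, (u ^ 2) ^ k / (k.factorial : ℝ)) := by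
        calc (∑' k : ℕ, c k) ≤ ∑' k : ℕ, ENNReal.ofReal ((u ^ 2) ^ k / (k.factorial : ℝ)) :=
              ENNReal.tsum_le_tsum hble
          _ = ENNReal.ofReal (∑' k : ℕ, (u ^ 2) ^ k / (k.factorial : ℝ)) :=
              (ENNReal.ofReal_tsum_of_nonneg (fun k => by positivity) hsummable).symm
      exact ne_top_of_le_ne_top ENNReal.ofReal_ne_top hle
    have hle2 : (∑' k : ℕ, ∫⁻ t in Set.Ioo (0:ℝ) 1, (‖f k t‖₊ : ℝ≥0∞))
        ≤ (∑' k : ℕ, c k) * (∫⁻ t in Set.Ioo (0:ℝ) 1, (‖(1 - t ^ 2) ^ (α - 1/2)‖₊ : ℝ≥0∞)) := by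
      calc (∑' k : ℕ, ∫⁻ t in Set.Ioo (0:ℝ) 1, (‖f k t‖₊ : ℝ≥0∞))
          ≤ ∑' k : ℕ, c k * (∫⁻ t in Set.Ioo (0:ℝ) 1, (‖(1 - t ^ 2) ^ (α - 1/2)‖₊ : ℝ≥0∞)) :=
            ENNReal.tsum_le_tsum hck
        _ = _ := ENNReal.tsum_mul_right
    exact ne_top_of_le_ne_top (ENNReal.mul_ne_top hsum hWW) hle2
  have hswap := integral_tsum hfmeas hbound
  have hptsum : ∀ t : ℝ, (∑' k : ℕ, f k t) = (1 - t ^ 2) ^ (α - 1/2) * Real.cos (u * t) := by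
    intro t
    rw [hf]
    rw [tsum_mul_left, Real.cos_eq_tsum (u * t)]
  have hrhs : (∫ t in Set.Ioo (0:ℝ) 1, (1 - t ^ 2) ^ (α - 1/2) * Real.cos (u * t))
      = ∑' k : ℕ, ∫ t in Set.Ioo (0:ℝ) 1, f k t := by
    rw [← hswap]
    apply MeasureTheory.integral_congr_ae
    exact Filter.Eventually.of_forall fun t => (hptsum t).symm
  have hterm : ∀ k : ℕ, (∫ t in Set.Ioo (0:ℝ) 1, f k t)
      = ((-1:ℝ) ^ k * u ^ (2*k) / ((2*k).factorial : ℝ)) * Jb α k := by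
    intro k
    rw [Jb, ← MeasureTheory.integral_const_mul]
    apply setIntegral_congr_fun measurableSet_Ioo
    intro t _
    rw [hf]
    simp only []
    rw [mul_pow]
    ring
  rw [hrhs]
  have hlhs : besselNorm α u * Jb α 0
      = ∑' k : ℕ, (Real.Gamma (α + 1) * ((-1:ℝ) ^ k * (u / 2) ^ (2 * k) /
          ((k.factorial : ℝ) * Real.Gamma (α + k + 1)))) * Jb α 0 := by
    rw [besselNorm, ← tsum_mul_left, ← tsum_mul_right]
  rw [hlhs]
  apply tsum_congr
  intro k
  rw [hterm k]
  have hk0 : (0:ℝ) ≤ (k:ℝ) := Nat.cast_nonneg k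
  have hΓpos : 0 < Real.Gamma (α + k + 1) := Real.Gamma_pos_of_pos (by linarith)
  have hform := Jb_formula hα k
  have h4 : ((4:ℝ)) ^ k = 2 ^ (2*k) := by rw [pow_mul]; norm_num
  have hupow : (u / 2) ^ (2*k) = u ^ (2*k) / 4 ^ k := by
    rw [div_pow, h4]
  rw [hupow]
  have hfk : ((k.factorial : ℕ) : ℝ) ≠ 0 := Nat.cast_ne_zero.2 (Nat.factorial_ne_zero k)
  have hf2k : (((2*k).factorial : ℕ) : ℝ) ≠ 0 := Nat.cast_ne_zero.2 (Nat.factorial_ne_zero _)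
  have h4k : ((4:ℝ)) ^ k ≠ 0 := by positivity
  have hden : (4:ℝ) ^ k * (k.factorial : ℝ) * Real.Gamma (α + k + 1) ≠ 0 :=
    mul_ne_zero (mul_ne_zero h4k hfk) (ne_of_gt hΓpos)
  have hJk : Jb α k = (((2*k).factorial : ℝ)) * Real.Gamma (α+1) * Jb α 0
      / (4 ^ k * (k.factorial : ℝ) * Real.Gamma (α + k + 1)) := by
    rw [eq_div_iff hden]; linear_combination hform
  rw [hJk]
  field_simp

lemma abs_besselNorm_le_one (hα : -1/2 < α) (u : ℝ) : |besselNorm α u| ≤ 1 := by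
  have hr1 : (-1:ℝ) < α - 1/2 := by linarith
  have hJ0 := Jb_zero_pos hα
  have key := besselNorm_mul_J0 hα u
  have hW : IntegrableOn (fun t : ℝ => t ^ (2*0) * (1 - t ^ 2) ^ (α - 1/2))
      (Set.Ioo (0:ℝ) 1) := integrableOn_pow_mul_rpow hr1 0
  have habs : |besselNorm α u * Jb α 0| ≤ Jb α 0 := by
    rw [key]
    calc |∫ t in Set.Ioo (0:ℝ) 1, (1 - t ^ 2) ^ (α - 1/2) * Real.cos (u * t)|
        ≤ ∫ t in Set.Ioo (0:ℝ) 1, |(1 - t ^ 2) ^ (α - 1/2) * Real.cos (u * t)| := by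
          rw [← Real.norm_eq_abs]
          exact
            norm_integral_le_integral_norm
              (μ := volume.restrict (Set.Ioo (0:ℝ) 1))
              (fun t => (1 - t ^ 2) ^ (α - 1/2) * Real.cos (u * t))
      _ ≤ ∫ t in Set.Ioo (0:ℝ) 1, t ^ (2*0) * (1 - t ^ 2) ^ (α - 1/2) := by
          apply integral_mono_of_nonneg (Filter.Eventually.of_forall fun t => abs_nonneg _) hW
          filter_upwards [ae_restrict_mem measurableSet_Ioo] with t ht
          have hb : (0:ℝ) < 1 - t ^ 2 := by nlinarith [ht.1, ht.2]
          rw [abs_mul, abs_of_nonneg (Real.rpow_nonneg hb.le _)]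
          calc (1 - t ^ 2) ^ (α - 1/2) * |Real.cos (u * t)|
              ≤ (1 - t ^ 2) ^ (α - 1/2) * 1 :=
                mul_le_mul_of_nonneg_left (Real.abs_cos_le_one _) (Real.rpow_nonneg hb.le _)
            _ = t ^ (2*0) * (1 - t ^ 2) ^ (α - 1/2) := by ring
      _ = Jb α 0 := rfl
  rw [abs_mul, abs_of_pos hJ0] at habs
  have h2 := (le_div_iff₀ hJ0).2 habs
  rwa [div_self (ne_of_gt hJ0)] at h2

lemma besselNorm_continuous (hα : -1/2 < α) : Continuous (besselNorm α) := by
  have hr1 : (-1:ℝ) < α - 1/2 := by linarith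
  have hJ0 := Jb_zero_pos hα
  have hW : IntegrableOn (fun t : ℝ => (1 - t ^ 2) ^ (α - 1/2)) (Set.Ioo (0:ℝ) 1) := by
    have := integrableOn_pow_mul_rpow hr1 0
    simpa using this
  have hWmeas : Measurable (fun t : ℝ => (1 - t ^ 2) ^ (α - 1/2)) :=
    (measurable_const.sub (measurable_id.pow_const 2)).pow measurable_const
  have heq : besselNorm α = fun u =>
      (∫ t in Set.Ioo (0:ℝ) 1, (1 - t ^ 2) ^ (α - 1/2) * Real.cos (u * t)) / Jb α 0 := by
    funext u
    rw [eq_div_iff (ne_of_gt hJ0)]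
    exact besselNorm_mul_J0 hα u
  rw [heq]
  apply Continuous.div_const
  apply continuous_of_dominated (bound := fun t => |(1 - t ^ 2) ^ (α - 1/2)|)
  · intro u
    exact (hWmeas.mul (Real.continuous_cos.comp (continuous_const.mul
      continuous_id)).measurable).aestronglyMeasurable
  · intro u
    refine Filter.Eventually.of_forall fun t => ?_
    rw [norm_mul, Real.norm_eq_abs, Real.norm_eq_abs]
    calc |(1 - t ^ 2) ^ (α - 1/2)| * |Real.cos (u * t)|
        ≤ |(1 - t ^ 2) ^ (α - 1/2)| * 1 :=
          mul_le_mul_of_nonneg_left (Real.abs_cos_le_one _) (abs_nonneg _)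
      _ = |(1 - t ^ 2) ^ (α - 1/2)| := mul_one _
  · exact hW.abs
  · refine Filter.Eventually.of_forall fun t => ?_
    exact continuous_const.mul (Real.continuous_cos.comp (continuous_mul_right t))

end WeinsteinAux


namespace WeinsteinAux

lemma norm_WKernel_le_one {d : ℕ} {α : ℝ} (hα : -1/2 < α) (x lam : Wsp d) :
    ‖WKernel d α x lam‖ ≤ 1 := by
  rw [WKernel, norm_mul]
  have h1 : ‖Complex.exp (-Complex.I *
      ((∑ i : Fin d, x (Fin.castSucc i) * lam (Fin.castSucc i) : ℝ) : ℂ))‖ = 1 := by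
    set r : ℝ := ∑ i : Fin d, x (Fin.castSucc i) * lam (Fin.castSucc i) with hr
    have he : -Complex.I * (r : ℂ) = ((-r : ℝ) : ℂ) * Complex.I := by push_cast; ring
    rw [he, Complex.norm_exp_ofReal_mul_I]
  rw [h1, one_mul, Complex.norm_real, Real.norm_eq_abs]
  exact abs_besselNorm_le_one hα _

lemma coord_continuous {d : ℕ} (i : Fin (d+1)) : Continuous (fun x : Wsp d => x i) := by
  exact (EuclideanSpace.proj i : EuclideanSpace ℝ (Fin (d+1)) →L[ℝ] ℝ).continuous

lemma wkernel_continuous {d : ℕ} {α : ℝ} (hα : -1/2 < α) :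
    Continuous (fun z : Wsp d × Wsp d => WKernel d α z.1 z.2) := by
  unfold WKernel
  apply Continuous.mul
  · apply Complex.continuous_exp.comp
    apply Continuous.mul continuous_const
    apply Complex.continuous_ofReal.comp
    apply continuous_finset_sum
    intro i _
    exact ((coord_continuous _).comp continuous_fst).mul
      ((coord_continuous _).comp continuous_snd)
  · apply Complex.continuous_ofReal.comp
    exact (besselNorm_continuous hα).comp
      (((coord_continuous _).comp continuous_fst).mul
        ((coord_continuous _).comp continuous_snd))

end WeinsteinAux

open WeinsteinAux

/-- Time-limiting bound for bandlimited functions (Proposition 4.10). -/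
theorem weinstein_bandlimited_timelimit_bound
    (d : ℕ) (hd : 1 ≤ d) (α : ℝ) (hα : -1/2 < α)
    (p : ℝ) (hp1 : 1 ≤ p) (hp2 : p ≤ 2)
    (Ω T : Set (Wsp d)) (hΩmeas : MeasurableSet Ω) (hTmeas : MeasurableSet T)
    (hΩ : Wmeasure d α Ω < ⊤) (hT : Wmeasure d α T < ⊤)
    (ψ : Wsp d → ℂ) (hψ1 : MemLp ψ 1 (Wmeasure d α))
    (hψp : MemLp ψ (ENNReal.ofReal p) (Wmeasure d α))
    (hband : Bandlimited d α T ψ) :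
    eLpNorm (Ω.indicator ψ) (ENNReal.ofReal p) (Wmeasure d α) ≤
      (Wmeasure d α T) ^ (1 / p) * (Wmeasure d α Ω) ^ (1 / p) *
        eLpNorm ψ (ENNReal.ofReal p) (Wmeasure d α) := by
  classical
  have hp0 : (0:ℝ) < p := lt_of_lt_of_le one_pos hp1
  have hpne : p ≠ 0 := ne_of_gt hp0
  set μ := Wmeasure d α with hμ
  haveI : SFinite μ := by rw [hμ, Wmeasure]; infer_instance
  set E := ENNReal.ofReal p with hE
  have hEtop : E ≠ ⊤ := ENNReal.ofReal_ne_top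
  have hE0 : E ≠ 0 := by
    rw [hE, Ne, ENNReal.ofReal_eq_zero, not_le]; exact hp0
  have hEreal : E.toReal = p := ENNReal.toReal_ofReal hp0.le
  have hκcont : Continuous (fun z : Wsp d × Wsp d => WKernel d α z.1 z.2) :=
    wkernel_continuous hα
  have hκle : ∀ x lam : Wsp d, ‖WKernel d α x lam‖ ≤ 1 := fun x lam =>
    norm_WKernel_le_one hα x lam
  have hψint : Integrable ψ μ := memLp_one_iff_integrable.mp hψ1
  set N1 : ℝ := ∫ x, ‖ψ x‖ ∂μ with hN1
  have hWTle : ∀ lam, ‖WT d α ψ lam‖ ≤ N1 := by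
    intro lam
    calc ‖WT d α ψ lam‖ ≤ ∫ x, ‖ψ x * WKernel d α x lam‖ ∂μ :=
          norm_integral_le_integral_norm _
      _ ≤ ∫ x, ‖ψ x‖ ∂μ := by
          apply integral_mono_of_nonneg (Filter.Eventually.of_forall fun x => norm_nonneg _)
            hψint.norm
          refine Filter.Eventually.of_forall fun x => ?_
          show ‖ψ x * WKernel d α x lam‖ ≤ ‖ψ x‖
          rw [norm_mul]
          exact mul_le_of_le_one_right (norm_nonneg _) (hκle x lam)
  have hprodmeas : AEStronglyMeasurable
      (fun z : Wsp d × Wsp d => ψ z.2 * WKernel d α z.2 z.1) ((μ.restrict T).prod μ) :=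
    (hψint.aestronglyMeasurable.comp_snd).mul
      ((hκcont.comp (continuous_snd.prodMk continuous_fst)).aestronglyMeasurable)
  have hWTmeas : AEStronglyMeasurable (WT d α ψ) (μ.restrict T) := by
    have h := hprodmeas.integral_prod_right'
    exact h
  have hTfin : μ.restrict T Set.univ < ⊤ := by
    rw [Measure.restrict_apply_univ]; exact hT
  have hWTint : IntegrableOn (WT d α ψ) T μ := by
    refine Integrable.mono' (g := fun _ => N1) ?_ hWTmeas ?_
    · exact (integrable_const_iff).2 (Or.inr ⟨hTfin⟩)
    · exact Filter.Eventually.of_forall hWTle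
  set S : ℝ := ∫ lam in T, ‖WT d α ψ lam‖ ∂μ with hS
  have hψS : ∀ᵐ x ∂μ, ‖ψ x‖ ≤ S := by
    filter_upwards [hband.2] with x hx
    rw [hx, Qop]
    calc ‖∫ lam in T, WT d α ψ lam * (starRingEnd ℂ) (WKernel d α x lam) ∂(Wmeasure d α)‖
        ≤ ∫ lam in T, ‖WT d α ψ lam * (starRingEnd ℂ) (WKernel d α x lam)‖ ∂μ :=
          norm_integral_le_integral_norm _
      _ ≤ ∫ lam in T, ‖WT d α ψ lam‖ ∂μ := by
          apply integral_mono_of_nonneg (Filter.Eventually.of_forall fun lam => norm_nonneg _)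
            hWTint.norm
          refine Filter.Eventually.of_forall fun lam => ?_
          show ‖WT d α ψ lam * (starRingEnd ℂ) (WKernel d α x lam)‖ ≤ ‖WT d α ψ lam‖
          rw [norm_mul, RCLike.norm_conj]
          exact mul_le_of_le_one_right (norm_nonneg _) (hκle x lam)
  -- the key Plancherel-type identity on T, via Fubini and the reproducing property
  set F : Wsp d × Wsp d → ℂ := fun z =>
    WT d α ψ z.1 * ((starRingEnd ℂ) (ψ z.2) * (starRingEnd ℂ) (WKernel d α z.2 z.1)) with hF
  have hFmeas : AEStronglyMeasurable F ((μ.restrict T).prod μ) := by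
    refine (hWTmeas.comp_fst).mul (AEStronglyMeasurable.mul ?_ ?_)
    · exact (RCLike.continuous_conj.comp_aestronglyMeasurable
        hψint.aestronglyMeasurable.comp_snd)
    · exact (RCLike.continuous_conj.comp
        (hκcont.comp (continuous_snd.prodMk continuous_fst))).aestronglyMeasurable
  have hFint : Integrable F ((μ.restrict T).prod μ) := by
    refine Integrable.mono' (g := fun z => N1 * ‖ψ z.2‖) ?_ hFmeas ?_
    · exact Integrable.mul_prod ((integrable_const_iff).2 (Or.inr ⟨hTfin⟩)) hψint.norm
    · refine Filter.Eventually.of_forall fun z => ?_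
      rw [hF]
      calc ‖WT d α ψ z.1 * ((starRingEnd ℂ) (ψ z.2) * (starRingEnd ℂ) (WKernel d α z.2 z.1))‖
          = ‖WT d α ψ z.1‖ * (‖ψ z.2‖ * ‖WKernel d α z.2 z.1‖) := by
            rw [norm_mul, norm_mul, RCLike.norm_conj, RCLike.norm_conj]
        _ ≤ N1 * (‖ψ z.2‖ * 1) := by
            have h1 := hWTle z.1
            have h2 := hκle z.2 z.1
            have h3 : ‖ψ z.2‖ * ‖WKernel d α z.2 z.1‖ ≤ ‖ψ z.2‖ * 1 :=
              mul_le_mul_of_nonneg_left h2 (norm_nonneg _)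
            exact mul_le_mul h1 h3 (by positivity) (le_trans (norm_nonneg _) h1)
        _ = N1 * ‖ψ z.2‖ := by rw [mul_one]
  have hkey : ∫ lam in T, Complex.normSq (WT d α ψ lam) ∂μ = ∫ x, Complex.normSq (ψ x) ∂μ := by
    have h1 : ∀ lam : Wsp d,
        ((Complex.normSq (WT d α ψ lam)) : ℂ) = ∫ x, F (lam, x) ∂μ := by
      intro lam
      rw [← Complex.mul_conj]
      have hconj : (starRingEnd ℂ) (WT d α ψ lam)
          = ∫ x, (starRingEnd ℂ) (ψ x) * (starRingEnd ℂ) (WKernel d α x lam) ∂μ := by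
        rw [WT, ← integral_conj]
        apply MeasureTheory.integral_congr_ae
        refine Filter.Eventually.of_forall fun x => ?_
        show (starRingEnd ℂ) (ψ x * WKernel d α x lam)
            = (starRingEnd ℂ) (ψ x) * (starRingEnd ℂ) (WKernel d α x lam)
        rw [map_mul]
      rw [hconj, ← MeasureTheory.integral_const_mul]
    have hswap := integral_integral_swap (f := fun lam x => F (lam, x))
      (μ := μ.restrict T) (ν := μ) hFint
    have h2 : ∀ x, (∫ lam in T, F (lam, x) ∂μ)
        = (starRingEnd ℂ) (ψ x) * Qop d α T ψ x := by
      intro x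
      rw [Qop, ← MeasureTheory.integral_const_mul]
      apply MeasureTheory.integral_congr_ae
      refine Filter.Eventually.of_forall fun lam => ?_
      rw [hF]; ring
    have h3 : (∫ x, (starRingEnd ℂ) (ψ x) * Qop d α T ψ x ∂μ)
        = ∫ x, ((Complex.normSq (ψ x)) : ℂ) ∂μ := by
      apply MeasureTheory.integral_congr_ae
      filter_upwards [hband.2] with x hx
      rw [← hx, mul_comm, Complex.mul_conj]
    have hall : ((∫ lam in T, Complex.normSq (WT d α ψ lam) ∂μ : ℝ) : ℂ)
        = ((∫ x, Complex.normSq (ψ x) ∂μ : ℝ) : ℂ) := by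
      calc ((∫ lam in T, Complex.normSq (WT d α ψ lam) ∂μ : ℝ) : ℂ)
          = ∫ lam in T, ((Complex.normSq (WT d α ψ lam) : ℝ) : ℂ) ∂μ :=
            _root_.integral_ofReal.symm
        _ = ∫ lam in T, ∫ x, F (lam, x) ∂μ ∂μ := by
            apply MeasureTheory.integral_congr_ae
            exact Filter.Eventually.of_forall fun lam => h1 lam
        _ = ∫ x, ∫ lam in T, F (lam, x) ∂μ ∂μ := hswap
        _ = ∫ x, ((Complex.normSq (ψ x) : ℝ) : ℂ) ∂μ := by
            rw [← h3]
            apply MeasureTheory.integral_congr_ae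
            exact Filter.Eventually.of_forall fun x => h2 x
        _ = ((∫ x, Complex.normSq (ψ x) ∂μ : ℝ) : ℂ) := _root_.integral_ofReal
    exact_mod_cast hall
  -- integrability of the squares
  have hWTsqint : IntegrableOn (fun lam => Complex.normSq (WT d α ψ lam)) T μ := by
    refine Integrable.mono' (g := fun _ => N1 * N1)
      ((integrable_const_iff).2 (Or.inr ⟨hTfin⟩))
      (Complex.continuous_normSq.comp_aestronglyMeasurable hWTmeas) ?_
    refine Filter.Eventually.of_forall fun lam => ?_
    have h := hWTle lam
    have hn : Complex.normSq (WT d α ψ lam) = ‖WT d α ψ lam‖ ^ 2 := by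
      rw [Complex.normSq_eq_norm_sq]
    show ‖Complex.normSq (WT d α ψ lam)‖ ≤ N1 * N1
    rw [Real.norm_eq_abs, abs_of_nonneg (Complex.normSq_nonneg _), hn, sq]
    exact mul_le_mul h h (norm_nonneg _) (le_trans (norm_nonneg _) h)
  have hψS' : ∀ᵐ x ∂μ, ‖ψ x‖ * ‖ψ x‖ ≤ S * ‖ψ x‖ := by
    filter_upwards [hψS] with x hx
    exact mul_le_mul_of_nonneg_right hx (norm_nonneg _)
  have hψsqint : Integrable (fun x => Complex.normSq (ψ x)) μ := by
    refine Integrable.mono' (hψint.norm.const_mul S)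
      (Complex.continuous_normSq.comp_aestronglyMeasurable hψint.aestronglyMeasurable) ?_
    filter_upwards [hψS'] with x hx
    have hn : Complex.normSq (ψ x) = ‖ψ x‖ ^ 2 := by
      rw [Complex.normSq_eq_norm_sq]
    rw [Real.norm_eq_abs, abs_of_nonneg (Complex.normSq_nonneg _), hn, sq]
    exact hx
  -- pass to lintegrals
  have hsq : ∀ z : ℂ, (‖z‖₊ : ℝ≥0∞) ^ (2:ℝ) = ENNReal.ofReal (Complex.normSq z) := by
    intro z
    rw [← enorm_eq_nnnorm, ← ofReal_norm_eq_enorm,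
      ENNReal.ofReal_rpow_of_nonneg (norm_nonneg z) (by norm_num)]
    congr 1
    rw [show ((2:ℝ)) = ((2:ℕ):ℝ) by norm_num, Real.rpow_natCast,
      Complex.sq_norm]
  set lp : ℝ≥0∞ := ∫⁻ x, (‖ψ x‖₊ : ℝ≥0∞) ^ p ∂μ with hlp
  set ls : ℝ≥0∞ := ∫⁻ lam in T, (‖WT d α ψ lam‖₊ : ℝ≥0∞) ∂μ with hls
  have hlsS : ls = ENNReal.ofReal S := by
    rw [hls, hS, ofReal_integral_norm_eq_lintegral_enorm hWTint]; rfl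
  have hlsfin : ls ≠ ⊤ := by rw [hlsS]; exact ENNReal.ofReal_ne_top
  have hψls : ∀ᵐ x ∂μ, (‖ψ x‖₊ : ℝ≥0∞) ≤ ls := by
    filter_upwards [hψS] with x hx
    rw [hlsS, ← enorm_eq_nnnorm, ← ofReal_norm_eq_enorm]
    exact ENNReal.ofReal_le_ofReal hx
  have htwoT : (∫⁻ lam in T, (‖WT d α ψ lam‖₊ : ℝ≥0∞) ^ (2:ℝ) ∂μ)
      = ∫⁻ x, (‖ψ x‖₊ : ℝ≥0∞) ^ (2:ℝ) ∂μ := by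
    have e1 : (∫⁻ lam in T, (‖WT d α ψ lam‖₊ : ℝ≥0∞) ^ (2:ℝ) ∂μ)
        = ENNReal.ofReal (∫ lam in T, Complex.normSq (WT d α ψ lam) ∂μ) := by
      rw [ofReal_integral_eq_lintegral_ofReal hWTsqint
        (Filter.Eventually.of_forall fun lam => Complex.normSq_nonneg _)]
      exact lintegral_congr fun lam => hsq _
    have e2 : (∫⁻ x, (‖ψ x‖₊ : ℝ≥0∞) ^ (2:ℝ) ∂μ)
        = ENNReal.ofReal (∫ x, Complex.normSq (ψ x) ∂μ) := by
      rw [ofReal_integral_eq_lintegral_ofReal hψsqint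
        (Filter.Eventually.of_forall fun x => Complex.normSq_nonneg _)]
      exact lintegral_congr fun x => hsq _
    rw [e1, e2, hkey]
  -- Cauchy–Schwarz on T
  have hconj : (2:ℝ).HolderConjugate 2 := Real.HolderConjugate.two_two
  have hCS : ls ≤ (∫⁻ lam in T, (‖WT d α ψ lam‖₊ : ℝ≥0∞) ^ (2:ℝ) ∂μ) ^ (1/2:ℝ)
      * (μ T) ^ (1/2:ℝ) := by
    have h := ENNReal.lintegral_mul_le_Lp_mul_Lq (μ.restrict T) hconj
      (hWTmeas.aemeasurable.enorm) (aemeasurable_const (b := (1:ℝ≥0∞)))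
    simp only [Pi.mul_apply, mul_one, ENNReal.one_rpow, lintegral_const,
      Measure.restrict_apply_univ, one_mul] at h
    exact h
  -- pointwise interpolation bound
  have h2p : (∫⁻ x, (‖ψ x‖₊ : ℝ≥0∞) ^ (2:ℝ) ∂μ) ≤ ls ^ (2 - p) * lp := by
    have hmono : ∀ᵐ x ∂μ, (‖ψ x‖₊ : ℝ≥0∞) ^ (2:ℝ) ≤ ls ^ (2-p) * (‖ψ x‖₊ : ℝ≥0∞) ^ p := by
      filter_upwards [hψls] with x hx
      by_cases h0 : (‖ψ x‖₊ : ℝ≥0∞) = 0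
      · rw [h0, ENNReal.zero_rpow_of_pos (by norm_num), ENNReal.zero_rpow_of_pos hp0, mul_zero]
      · have hne : (‖ψ x‖₊ : ℝ≥0∞) ≠ ⊤ := ENNReal.coe_ne_top
        have he : (‖ψ x‖₊ : ℝ≥0∞) ^ (2:ℝ)
            = (‖ψ x‖₊ : ℝ≥0∞) ^ (2-p) * (‖ψ x‖₊ : ℝ≥0∞) ^ p := by
          rw [← ENNReal.rpow_add _ _ h0 hne]; norm_num
        rw [he]
        exact mul_le_mul_left (ENNReal.rpow_le_rpow hx (by linarith)) _
    calc (∫⁻ x, (‖ψ x‖₊ : ℝ≥0∞) ^ (2:ℝ) ∂μ)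
        ≤ ∫⁻ x, ls ^ (2-p) * (‖ψ x‖₊ : ℝ≥0∞) ^ p ∂μ := lintegral_mono_ae hmono
      _ = ls ^ (2-p) * lp := lintegral_const_mul' _ _
          (ENNReal.rpow_ne_top_of_nonneg (by linarith) hlsfin)
  -- the bootstrap
  have hlp_fin : lp ≠ ⊤ := by
    intro hcon
    have h := hψp.2
    rw [eLpNorm_eq_lintegral_rpow_enorm_toReal hE0 hEtop, hEreal] at h
    simp only [enorm_eq_nnnorm] at h
    rw [← hlp, hcon, ENNReal.top_rpow_of_pos (by positivity)] at h
    exact (lt_irrefl ⊤ h)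
  have hlsbound : ls ≤ (μ T) ^ (1/p) * lp ^ (1/p) := by
    rcases eq_or_ne ls 0 with h0 | h0
    · rw [h0]; exact zero_le
    · have step1 : ls ≤ ls ^ ((2-p)/2 : ℝ) * (lp ^ (1/2:ℝ) * (μ T) ^ (1/2:ℝ)) := by
        calc ls ≤ (∫⁻ lam in T, (‖WT d α ψ lam‖₊ : ℝ≥0∞) ^ (2:ℝ) ∂μ) ^ (1/2:ℝ)
              * (μ T) ^ (1/2:ℝ) := hCS
          _ ≤ (ls ^ (2-p) * lp) ^ (1/2:ℝ) * (μ T) ^ (1/2:ℝ) := by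
              apply mul_le_mul_left
              apply ENNReal.rpow_le_rpow _ (by norm_num)
              rw [htwoT]; exact h2p
          _ = ls ^ ((2-p)/2 : ℝ) * (lp ^ (1/2:ℝ) * (μ T) ^ (1/2:ℝ)) := by
              rw [ENNReal.mul_rpow_of_nonneg _ _ (by norm_num : (0:ℝ) ≤ 1/2),
                ← ENNReal.rpow_mul, mul_assoc]
              congr 2
              ring
      have step2 : ls ^ (p/2 : ℝ) ≤ lp ^ (1/2:ℝ) * (μ T) ^ (1/2:ℝ) := by
        have hmul := mul_le_mul_left step1 (ls ^ ((p-2)/2 : ℝ))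
        have e1 : ls * ls ^ ((p-2)/2 : ℝ) = ls ^ (p/2 : ℝ) := by
          nth_rewrite 1 [← ENNReal.rpow_one ls]
          rw [← ENNReal.rpow_add _ _ h0 hlsfin]
          congr 1; ring
        have e2 : ls ^ ((2-p)/2 : ℝ) * (lp ^ (1/2:ℝ) * (μ T) ^ (1/2:ℝ)) * ls ^ ((p-2)/2 : ℝ)
            = lp ^ (1/2:ℝ) * (μ T) ^ (1/2:ℝ) := by
          rw [mul_comm (ls ^ ((2-p)/2 : ℝ)) _, mul_assoc, ← ENNReal.rpow_add _ _ h0 hlsfin]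
          rw [show ((2-p)/2 + (p-2)/2 : ℝ) = 0 by ring, ENNReal.rpow_zero, mul_one]
        rw [e1, e2] at hmul
        exact hmul
      have step3 := ENNReal.rpow_le_rpow step2 (by positivity : (0:ℝ) ≤ 2/p)
      have e3 : (ls ^ (p/2 : ℝ)) ^ (2/p : ℝ) = ls := by
        rw [← ENNReal.rpow_mul]
        rw [show ((p/2) * (2/p) : ℝ) = 1 by field_simp, ENNReal.rpow_one]
      have e4 : (lp ^ (1/2:ℝ) * (μ T) ^ (1/2:ℝ)) ^ (2/p : ℝ)
          = lp ^ (1/p : ℝ) * (μ T) ^ (1/p : ℝ) := by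
        rw [ENNReal.mul_rpow_of_nonneg _ _ (by positivity : (0:ℝ) ≤ 2/p),
          ← ENNReal.rpow_mul, ← ENNReal.rpow_mul]
        rw [show ((1/2) * (2/p) : ℝ) = 1/p by field_simp]
      rw [e3, e4] at step3
      rw [mul_comm] at step3
      exact step3
  -- the left-hand side
  have hLHS : eLpNorm (Ω.indicator ψ) E μ ≤ ls * (μ Ω) ^ (1/p : ℝ) := by
    rw [eLpNorm_eq_lintegral_rpow_enorm_toReal hE0 hEtop, hEreal]
    have hpt : ∀ x, (‖Ω.indicator ψ x‖₊ : ℝ≥0∞) ^ p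
        = Ω.indicator (fun x => (‖ψ x‖₊ : ℝ≥0∞) ^ p) x := by
      intro x
      by_cases hx : x ∈ Ω
      · rw [Set.indicator_of_mem hx, Set.indicator_of_mem hx]
      · rw [Set.indicator_of_notMem hx, Set.indicator_of_notMem hx]
        rw [nnnorm_zero, ENNReal.coe_zero, ENNReal.zero_rpow_of_pos hp0]
    calc (∫⁻ x, (‖Ω.indicator ψ x‖₊ : ℝ≥0∞) ^ p ∂μ) ^ (1/p : ℝ)
        = (∫⁻ x in Ω, (‖ψ x‖₊ : ℝ≥0∞) ^ p ∂μ) ^ (1/p : ℝ) := by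
          rw [lintegral_congr hpt, lintegral_indicator hΩmeas]
      _ ≤ (∫⁻ _ in Ω, ls ^ p ∂μ) ^ (1/p : ℝ) := by
          apply ENNReal.rpow_le_rpow _ (by positivity)
          apply lintegral_mono_ae
          filter_upwards [ae_restrict_of_ae hψls] with x hx
          exact ENNReal.rpow_le_rpow hx hp0.le
      _ = (ls ^ p * μ Ω) ^ (1/p : ℝ) := by rw [setLIntegral_const]
      _ = ls * (μ Ω) ^ (1/p : ℝ) := by
          rw [ENNReal.mul_rpow_of_nonneg _ _ (by positivity : (0:ℝ) ≤ 1/p),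
            ← ENNReal.rpow_mul, show (p * (1/p) : ℝ) = 1 by field_simp, ENNReal.rpow_one]
  have hRHS : eLpNorm ψ E μ = lp ^ (1/p : ℝ) := by
    rw [eLpNorm_eq_lintegral_rpow_enorm_toReal hE0 hEtop, hEreal]; rfl
  calc eLpNorm (Ω.indicator ψ) E μ ≤ ls * (μ Ω) ^ (1/p : ℝ) := hLHS
    _ ≤ ((μ T) ^ (1/p : ℝ) * lp ^ (1/p : ℝ)) * (μ Ω) ^ (1/p : ℝ) :=
        mul_le_mul_left hlsbound _
    _ = (μ T) ^ (1/p : ℝ) * (μ Ω) ^ (1/p : ℝ) * (eLpNorm ψ E μ) := by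
        rw [hRHS]; ring
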